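/- arXiv:0811.1935 — 2 statements merged into one kernel-verified Lean document; each statement's English description precedes it below -/
import Mathlib

section
/- Let F: [0,∞) → [0,∞) be non-decreasing and tending to infinity with right-continuous inverse F⁻¹. If there exists a > 0 with F⁻¹(s·x) ≤ 2^a s^a F⁻¹(x) for all s,x ≥ 1, then F satisfies the reverse lower bound: F(s·x) ≥ (1/2) s^{1/a} F(x) for all s ≥ 2^a and all x ≥ F⁻¹(1). -/
open Filter Set

/-- The right-continuous generalized inverse F⁻¹(x) = inf {y ≥ 0 : F(y) > x}. -/
noncomputable def Finv (F : ℝ → ℝ) (x : ℝ) : ℝ := sInf {y : ℝ | 0 ≤ y ∧ x < F y}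

/-- If F⁻¹(s·x) ≤ 2^a s^a F⁻¹(x) for all s, x ≥ 1, then
F(s·x) ≥ (1/2) s^(1/a) F(x) for all s ≥ 2^a and x ≥ F⁻¹(1). -/
theorem F_lower_bound_of_Finv_doubling (F : ℝ → ℝ)
    (hmono : Monotone F) (hF0 : ∀ x, 0 ≤ x → 0 ≤ F x)
    (htop : Filter.Tendsto F Filter.atTop Filter.atTop)
    (a : ℝ) (ha : 0 < a)
    (hdbl : ∀ s x : ℝ, 1 ≤ s → 1 ≤ x →
      Finv F (s * x) ≤ (2 : ℝ) ^ a * s ^ a * Finv F x) :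
    ∀ s x : ℝ, (2 : ℝ) ^ a ≤ s → Finv F 1 ≤ x → 0 ≤ x →
      2⁻¹ * s ^ (1 / a) * F x ≤ F (s * x) := by
  have hS : ∀ v : ℝ, {y : ℝ | 0 ≤ y ∧ v < F y}.Nonempty := by
    intro v
    obtain ⟨y, hy1, hy2⟩ := ((htop.eventually_gt_atTop v).and (eventually_ge_atTop (0:ℝ))).exists
    exact ⟨y, hy2, hy1⟩
  have hbdd : ∀ v : ℝ, BddBelow {y : ℝ | 0 ≤ y ∧ v < F y} := fun v => ⟨0, fun y hy => hy.1⟩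
  have hnn : ∀ v : ℝ, 0 ≤ Finv F v := fun v => le_csInf (hS v) fun y hy => hy.1
  -- L2 : Finv v < z → v < F z
  have hlt : ∀ v z : ℝ, Finv F v < z → v < F z := by
    intro v z h
    obtain ⟨y, hy, hyz⟩ := (csInf_lt_iff (hbdd v) (hS v)).1 h
    exact hy.2.trans_le (hmono hyz.le)
  -- L3 : v < F z → Finv v ≤ z
  have hle : ∀ v z : ℝ, 0 ≤ z → v < F z → Finv F v ≤ z := fun v z hz hvz =>
    csInf_le (hbdd v) ⟨hz, hvz⟩
  -- L4 : 0 < Finv F 1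
  have hFinv1 : 0 < Finv F 1 := by
    rcases lt_or_ge 0 (Finv F 1) with h | h
    · exact h
    have h0 : Finv F 1 = 0 := le_antisymm h (hnn 1)
    exfalso
    have hbig : ∀ u : ℝ, 1 ≤ u → u < F 1 := by
      intro u hu
      have hd := hdbl u 1 hu le_rfl
      rw [mul_one, h0, mul_zero] at hd
      exact hlt u 1 (lt_of_le_of_lt hd one_pos)
    have := hbig (max 1 (F 1)) (le_max_left _ _)
    exact absurd this (not_lt.2 (le_max_right _ _))
  intro s x hs hx hx0
  have hx0' : 0 < x := hFinv1.trans_le hx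
  have h2a : (1:ℝ) < 2 ^ a :=
    Real.one_lt_rpow_iff_of_pos (by norm_num) |>.2 (Or.inl ⟨one_lt_two, ha⟩)
  have hs1 : 1 < s := h2a.trans_le hs
  have hs0 : 0 < s := by linarith
  have hsr : (2:ℝ) ≤ s ^ (1 / a) := by
    have h1 : ((2:ℝ) ^ a) ^ (1/a) ≤ s ^ (1/a) :=
      Real.rpow_le_rpow (by positivity) hs (by positivity)
    rwa [← Real.rpow_mul (by norm_num), mul_one_div_cancel ha.ne', Real.rpow_one] at h1
  set t : ℝ := 2⁻¹ * s ^ (1/a) with htdef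
  have ht1 : 1 ≤ t := by rw [htdef]; linarith
  have ht0 : 0 < t := lt_of_lt_of_le one_pos ht1
  have hta : (2:ℝ) ^ a * t ^ a = s := by
    have h1 : (s ^ (1/a)) ^ a = s := by
      rw [← Real.rpow_mul hs0.le, one_div, inv_mul_cancel₀ ha.ne', Real.rpow_one]
    have h2 : (2:ℝ) ^ a * (2⁻¹:ℝ) ^ a = 1 := by
      rw [← Real.mul_rpow (by norm_num) (by norm_num)]
      norm_num
    calc (2:ℝ) ^ a * (2⁻¹ * s ^ (1/a)) ^ a
        = (2:ℝ) ^ a * ((2⁻¹:ℝ) ^ a * (s ^ (1/a)) ^ a) := by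
          rw [Real.mul_rpow (by norm_num) (by positivity)]
      _ = ((2:ℝ) ^ a * (2⁻¹:ℝ) ^ a) * s := by rw [h1]; ring
      _ = s := by rw [h2, one_mul]
  have h2a0 : (0:ℝ) < 2 ^ a := by positivity
  show t * F x ≤ F (s * x)
  apply le_of_forall_lt
  intro v hv
  rcases lt_or_ge v 1 with hv1 | hv1
  · -- case v < 1
    have hlt1 : Finv F 1 < s * x := lt_of_le_of_lt hx (by nlinarith)
    have := hlt 1 (s * x) hlt1
    linarith
  rcases lt_or_ge v (F x) with hvF | hvF
  · -- case 1 ≤ v < F x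
    have h1 := hle v x hx0'.le hvF
    exact hlt v (s * x) (lt_of_le_of_lt h1 (by nlinarith))
  rcases lt_or_ge v t with hvt | hvt
  · -- case 1 ≤ v < t
    have hd := hdbl v 1 hv1 le_rfl
    rw [mul_one] at hd
    have hva : v ^ a < t ^ a := Real.rpow_lt_rpow (by linarith) hvt ha
    have hva0 : (0:ℝ) < v ^ a := Real.rpow_pos_of_pos (by linarith) a
    have hkey : Finv F v < s * x := by
      have h3 : (2:ℝ) ^ a * v ^ a * Finv F 1 < 2 ^ a * t ^ a * x := by
        have e1 : (2:ℝ) ^ a * v ^ a * Finv F 1 ≤ 2 ^ a * v ^ a * x :=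
          mul_le_mul_of_nonneg_left hx (mul_pos h2a0 hva0).le
        have e2 : (2:ℝ) ^ a * v ^ a * x < 2 ^ a * t ^ a * x :=
          mul_lt_mul_of_pos_right (mul_lt_mul_of_pos_left hva h2a0) hx0'
        linarith
      rw [hta] at h3
      exact lt_of_le_of_lt hd h3
    exact hlt v (s * x) hkey
  · -- case 1 ≤ t ≤ v, F x ≤ v
    have hFx0 : 0 < F x := by nlinarith
    set s' : ℝ := (v / F x + t) / 2 with hs'def
    have hdivlt : v / F x < t := (div_lt_iff₀ hFx0).2 (by nlinarith)
    have hdivge : 1 ≤ v / F x := (one_le_div hFx0).2 hvF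
    have hs'lt : s' < t := by rw [hs'def]; linarith
    have hs'gt : v / F x < s' := by rw [hs'def]; linarith
    have hs'1 : 1 ≤ s' := by linarith
    have hs'0 : 0 < s' := by linarith
    have hx'1 : 1 ≤ v / s' := (one_le_div hs'0).2 (by linarith)
    have hvs'F : v / s' < F x := (div_lt_iff₀ hs'0).2 ((div_lt_iff₀ hFx0).1 hs'gt |>.trans_le (by rw [mul_comm]))
    have hfle : Finv F (v / s') ≤ x := hle _ _ hx0'.le hvs'F
    have hd := hdbl s' (v / s') hs'1 hx'1
    rw [mul_div_cancel₀ v hs'0.ne'] at hd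
    have hs'a : s' ^ a < t ^ a := Real.rpow_lt_rpow hs'0.le hs'lt ha
    have hs'a0 : (0:ℝ) < s' ^ a := Real.rpow_pos_of_pos hs'0 a
    have hfnn := hnn (v / s')
    have hkey : Finv F v < s * x := by
      have h3 : (2:ℝ) ^ a * s' ^ a * Finv F (v / s') < 2 ^ a * t ^ a * x := by
        have e1 : (2:ℝ) ^ a * s' ^ a * Finv F (v / s') ≤ 2 ^ a * s' ^ a * x :=
          mul_le_mul_of_nonneg_left hfle (mul_pos h2a0 hs'a0).le
        have e2 : (2:ℝ) ^ a * s' ^ a * x < 2 ^ a * t ^ a * x :=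
          mul_lt_mul_of_pos_right (mul_lt_mul_of_pos_left hs'a h2a0) hx0'
        linarith
      rw [hta] at h3
      exact lt_of_le_of_lt hd h3
    exact hlt v (s * x) hkey
end

section
/- Let μ be a finite Borel measure on (∂U, δ), and g: (0,r₀) → (0,∞) right-continuous, non-decreasing, with lim_{r→0} g(r) = 0 and g(2r) ≤ C·g(r) for some C > 1. If A ⊆ ∂U is a Borel set such that limsup_{r→0} μ(B(u,r))/g(r) ≥ 1 for every u ∈ A, then H_g(A) ≤ C·μ(A). -/
open Filter Set

/-- The boundary ∂U: infinite sequences of positive integers. -/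
abbrev pU := ℕ → ℕ+

-- δ(u,v) = exp(-|u∧v|), where |u∧v| is the length of the longest common
-- prefix of u and v; δ(u,u) = 0.
open Classical in
noncomputable def delta (u v : pU) : ℝ :=
  if h : u = v then 0 else Real.exp (-(Nat.find (Function.ne_iff.mp h) : ℝ))

/-- Open ball in (∂U, δ). -/
def dball (u : pU) (r : ℝ) : Set pU := {v | delta u v < r}

open ENNReal MeasureTheory in
instance : MeasurableSpace ℕ+ := ⊤

/-- Diameter of a subset of ∂U for the metric δ, valued in [0,∞]. -/
noncomputable def ediam (A : Set pU) : ENNReal :=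
  ⨆ u ∈ A, ⨆ v ∈ A, ENNReal.ofReal (delta u v)

/-- g(diam S), with the convention that sets of null diameter contribute 0. -/
noncomputable def gaugeOf (g : ℝ → ℝ) (S : Set pU) : ENNReal :=
  if ediam S = 0 then 0 else ENNReal.ofReal (g (ediam S).toReal)

/-- Pre-measure: infimum of Σ g(diam Cₙ) over countable covers by sets of
diameter at most ε. -/
noncomputable def Hpre (g : ℝ → ℝ) (ε : ℝ) (A : Set pU) : ENNReal :=
  ⨅ (C : ℕ → Set pU) (_ : A ⊆ ⋃ n, C n)
    (_ : ∀ n, ediam (C n) ≤ ENNReal.ofReal ε), ∑' n, gaugeOf g (C n)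

/-- The g-Hausdorff measure H_g on (∂U, δ). -/
noncomputable def Hmeas (g : ℝ → ℝ) (A : Set pU) : ENNReal :=
  ⨆ (ε : ℝ) (_ : 0 < ε), Hpre g ε A

/-! ### Auxiliary material -/

/-- Cylinder of length `n` around `u`. -/
def cyl (u : pU) (n : ℕ) : Set pU := {v | ∀ i < n, v i = u i}

lemma mem_cyl {u v : pU} {n : ℕ} : v ∈ cyl u n ↔ ∀ i < n, v i = u i := Iff.rfl

lemma self_mem_cyl (u : pU) (n : ℕ) : u ∈ cyl u n := fun _ _ => rfl

lemma cyl_anti {u : pU} {m n : ℕ} (h : m ≤ n) : cyl u n ⊆ cyl u m :=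
  fun _ hv i hi => hv i (lt_of_lt_of_le hi h)

lemma cyl_eq_of_mem {u v : pU} {n : ℕ} (h : v ∈ cyl u n) : cyl v n = cyl u n := by
  ext w
  constructor <;> intro hw i hi
  · rw [hw i hi, h i hi]
  · rw [hw i hi, ← h i hi]

lemma delta_nonneg (u v : pU) : 0 ≤ delta u v := by
  unfold delta
  split
  · exact le_refl 0
  · exact (Real.exp_pos _).le

lemma delta_le_exp {u v : pU} {n : ℕ} (h : ∀ i < n, u i = v i) :
    delta u v ≤ Real.exp (-(n : ℝ)) := by
  unfold delta
  split
  · exact (Real.exp_pos _).le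
  · rename_i hne
    apply Real.exp_le_exp.mpr
    simp only [neg_le_neg_iff, Nat.cast_le]
    exact Nat.le_find_iff _ _ |>.mpr fun m hm => not_not.mpr (h m hm)

lemma eq_of_delta_lt_exp {u v : pU} {n : ℕ} (h : delta u v < Real.exp (-(n : ℝ))) :
    ∀ i ≤ n, u i = v i := by
  intro i hi
  unfold delta at h
  split at h
  · rename_i he; rw [he]
  · rename_i hne
    have h2 : (n : ℝ) < (Nat.find (Function.ne_iff.mp hne) : ℝ) := by
      have := Real.exp_lt_exp.mp h
      linarith
    have hn : i < Nat.find (Function.ne_iff.mp hne) :=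
      lt_of_le_of_lt hi (by exact_mod_cast h2)
    exact not_not.mp (Nat.find_min _ hn)

lemma cyl_subset_dball {u : pU} {n : ℕ} {r : ℝ} (h : Real.exp (-(n : ℝ)) < r) :
    cyl u n ⊆ dball u r := by
  intro v hv
  exact lt_of_le_of_lt (delta_le_exp fun i hi => (hv i hi).symm) h

lemma ediam_le_exp {u : pU} {n : ℕ} : ediam (cyl u n) ≤ ENNReal.ofReal (Real.exp (-(n : ℝ))) := by
  refine iSup₂_le fun v hv => iSup₂_le fun w hw => ENNReal.ofReal_le_ofReal ?_
  exact delta_le_exp fun i hi => (hv i hi).trans (hw i hi).symm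

lemma ediam_cyl (u : pU) (n : ℕ) :
    ediam (cyl u n) = ENNReal.ofReal (Real.exp (-(n : ℝ))) := by
  refine le_antisymm ediam_le_exp ?_
  set a : pU := fun i => if i < n then u i else 1 with ha
  set b : pU := fun i => if i < n then u i else if i = n then 2 else 1 with hb
  have hab : a ≠ b := by
    intro h
    have h2 := congrFun h n
    simp [ha, hb] at h2
  have hma : a ∈ cyl u n := by intro i hi; simp [ha, hi]
  have hmb : b ∈ cyl u n := by intro i hi; simp [hb, hi]
  have hd : delta a b = Real.exp (-(n : ℝ)) := by
    unfold delta
    rw [dif_neg hab]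
    have hfind : Nat.find (Function.ne_iff.mp hab) = n := by
      rw [Nat.find_eq_iff]
      constructor
      · show a n ≠ b n
        simp [ha, hb]
      · intro m hm
        show ¬ a m ≠ b m
        simp [ha, hb, hm]
    rw [hfind]
  calc ENNReal.ofReal (Real.exp (-(n : ℝ))) = ENNReal.ofReal (delta a b) := by rw [hd]
    _ ≤ ediam (cyl u n) := by
        unfold ediam
        exact le_iSup₂_of_le a hma (le_iSup₂_of_le b hmb le_rfl)


lemma ediam_empty : ediam (∅ : Set pU) = 0 := by simp [ediam]

lemma gaugeOf_empty (g : ℝ → ℝ) : gaugeOf g (∅ : Set pU) = 0 := by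
  simp [gaugeOf, ediam_empty]

lemma gaugeOf_cyl (g : ℝ → ℝ) (u : pU) (n : ℕ) :
    gaugeOf g (cyl u n) = ENNReal.ofReal (g (Real.exp (-(n : ℝ)))) := by
  have h0 : ediam (cyl u n) ≠ 0 := by
    rw [ediam_cyl]
    simpa using (Real.exp_pos _)
  rw [gaugeOf, if_neg h0, ediam_cyl, ENNReal.toReal_ofReal (Real.exp_pos _).le]

lemma measurableSet_cyl (u : pU) (n : ℕ) : MeasurableSet (cyl u n) := by
  have : cyl u n = ⋂ (i : ℕ) (_ : i < n), (fun v : pU => v i) ⁻¹' {u i} := by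
    ext v; simp [mem_cyl]
  rw [this]
  exact MeasurableSet.iInter fun i => MeasurableSet.iInter fun _ =>
    (measurable_pi_apply i) (by trivial)

lemma cyl_countable_range :
    Set.Countable (Set.range (fun p : (Σ n : ℕ, Fin n → ℕ+) => cyl (fun i => if h : i < p.1 then p.2 ⟨i, h⟩ else 1) p.1)) :=
  Set.countable_range _

lemma cyl_mem_range (u : pU) (n : ℕ) :
    cyl u n ∈ Set.range (fun p : (Σ n : ℕ, Fin n → ℕ+) => cyl (fun i => if h : i < p.1 then p.2 ⟨i, h⟩ else 1) p.1) := by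
  refine ⟨⟨n, fun i => u i⟩, ?_⟩
  ext v
  simp only [mem_cyl]
  constructor <;> intro h i hi
  · rw [h i hi, dif_pos hi]
  · rw [h i hi, dif_pos hi]

lemma exists_cyl_subset_of_isOpen {U : Set pU} (hU : IsOpen U) {u : pU} (hu : u ∈ U) :
    ∃ m, cyl u m ⊆ U := by
  obtain ⟨I, t, h1, h2⟩ := isOpen_pi_iff.mp hU u hu
  refine ⟨(I.sup id) + 1, fun v hv => h2 ?_⟩
  intro i hi
  have : v i = u i := hv i (Nat.lt_succ_of_le (Finset.le_sup (f := id) hi))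
  rw [this]
  exact (h1 i hi).2


lemma dball_subset_cyl_find {u : pU} {r : ℝ} (hexn : ∃ n : ℕ, Real.exp (-(n : ℝ)) < r) :
    dball u r ⊆ cyl u (Nat.find hexn) := by
  intro v hv i hi
  rcases Nat.eq_zero_or_pos (Nat.find hexn) with h0 | hpos
  · rw [h0] at hi; exact absurd hi (Nat.not_lt_zero _)
  · obtain ⟨m', hm'⟩ : ∃ m', Nat.find hexn = m' + 1 := ⟨_, (Nat.succ_pred_eq_of_pos hpos).symm⟩
    have hge : ¬ Real.exp (-(m' : ℝ)) < r := Nat.find_min hexn (by omega)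
    have hlt : delta u v < Real.exp (-(m' : ℝ)) := lt_of_lt_of_le hv (not_lt.mp hge)
    exact (eq_of_delta_lt_exp hlt i (by omega)).symm

open MeasureTheory in
/-- Goodness predicate for the Vitali-type argument. -/
def GoodN (μ : Measure pU) (U : Set pU) (g : ℝ → ℝ) (a ε r0 : ℝ) (u : pU) (n : ℕ) : Prop :=
  cyl u n ⊆ U ∧ Real.exp (-(n : ℝ)) < ε ∧ Real.exp (-(n : ℝ)) < r0 ∧
    ENNReal.ofReal a * ENNReal.ofReal (g (Real.exp (-(n : ℝ)))) ≤ μ (cyl u n)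

open MeasureTheory in
lemma goodN_congr {μ : Measure pU} {U : Set pU} {g : ℝ → ℝ} {a ε r0 : ℝ} {u v : pU} {n : ℕ}
    (h : cyl u n = cyl v n) (hg : GoodN μ U g a ε r0 u n) : GoodN μ U g a ε r0 v n := by
  unfold GoodN at hg ⊢
  rw [← h]
  exact hg

open MeasureTheory Classical in
/-- Minimal good cylinder length. -/
noncomputable def Lmin (μ : Measure pU) (U : Set pU) (g : ℝ → ℝ) (a ε r0 : ℝ) (u : pU) : ℕ :=
  if h : ∃ n, GoodN μ U g a ε r0 u n then Nat.find h else 0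

open MeasureTheory in
lemma Lmin_spec {μ : Measure pU} {U : Set pU} {g : ℝ → ℝ} {a ε r0 : ℝ} {u : pU}
    (h : ∃ n, GoodN μ U g a ε r0 u n) : GoodN μ U g a ε r0 u (Lmin μ U g a ε r0 u) := by
  classical
  rw [Lmin, dif_pos h]; exact Nat.find_spec h

open MeasureTheory in
lemma Lmin_min {μ : Measure pU} {U : Set pU} {g : ℝ → ℝ} {a ε r0 : ℝ} {u : pU} {n : ℕ}
    (h : GoodN μ U g a ε r0 u n) : Lmin μ U g a ε r0 u ≤ n := by
  classical
  rw [Lmin, dif_pos ⟨n, h⟩]; exact Nat.find_min' _ h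

open MeasureTheory in
lemma cyl_Lmin_eq_of_le {μ : Measure pU} {U : Set pU} {g : ℝ → ℝ} {a ε r0 : ℝ} {u v : pU}
    (hu : ∃ n, GoodN μ U g a ε r0 u n) (hv : ∃ n, GoodN μ U g a ε r0 v n)
    (hle : Lmin μ U g a ε r0 u ≤ Lmin μ U g a ε r0 v)
    (hnd : ¬ Disjoint (cyl u (Lmin μ U g a ε r0 u)) (cyl v (Lmin μ U g a ε r0 v))) :
    cyl u (Lmin μ U g a ε r0 u) = cyl v (Lmin μ U g a ε r0 v) := by
  obtain ⟨w, hw1, hw2⟩ := Set.not_disjoint_iff.mp hnd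
  have hw2' : w ∈ cyl v (Lmin μ U g a ε r0 u) := cyl_anti hle hw2
  have e1 : cyl u (Lmin μ U g a ε r0 u) = cyl v (Lmin μ U g a ε r0 u) :=
    (cyl_eq_of_mem hw1).symm.trans (cyl_eq_of_mem hw2')
  have hgv : GoodN μ U g a ε r0 v (Lmin μ U g a ε r0 u) := goodN_congr e1 (Lmin_spec hu)
  have : Lmin μ U g a ε r0 v = Lmin μ U g a ε r0 u := le_antisymm (Lmin_min hgv) hle
  rw [e1, this]

open MeasureTheory in
lemma key_lemma (r0 : ℝ) (hr0 : 0 < r0) (g : ℝ → ℝ)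
    (hg_pos : ∀ r ∈ Set.Ioo 0 r0, 0 < g r)
    (hg_mono : MonotoneOn g (Set.Ioo 0 r0))
    (μ : Measure pU) [IsFiniteMeasure μ] (A : Set pU)
    (hden : ∀ u ∈ A, 1 ≤ Filter.limsup (fun r : ℝ => μ (dball u r) / ENNReal.ofReal (g r))
        (nhdsWithin 0 (Set.Ioi 0)))
    (a η ε : ℝ) (ha0 : 0 < a) (ha1 : a < 1) (hη : 0 < η) (hε : 0 < ε) :
    Hpre g ε A ≤ (ENNReal.ofReal a)⁻¹ * (μ A + ENNReal.ofReal η) := by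
  classical
  obtain ⟨U, hAU, hUopen, hUlt⟩ := Set.exists_isOpen_lt_of_lt A (μ A + ENNReal.ofReal η)
    (ENNReal.lt_add_right (measure_ne_top μ A) (by simpa using hη))
  -- every point of A admits a good cylinder
  have hexall : ∀ u ∈ A, ∃ n, GoodN μ U g a ε r0 u n := by
    intro u hu
    obtain ⟨m, hm⟩ := exists_cyl_subset_of_isOpen hUopen (hAU hu)
    set c := min (min ε r0) (Real.exp (-(m : ℝ))) with hc_def
    have hc : 0 < c := lt_min (lt_min hε hr0) (Real.exp_pos _)
    have hfreq : ∃ r ∈ Set.Ioo (0:ℝ) c,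
        ENNReal.ofReal a < μ (dball u r) / ENNReal.ofReal (g r) := by
      by_contra hcon
      push_neg at hcon
      have hev : ∀ᶠ r in nhdsWithin 0 (Set.Ioi 0),
          μ (dball u r) / ENNReal.ofReal (g r) ≤ ENNReal.ofReal a :=
        Filter.eventually_of_mem (Ioo_mem_nhdsGT hc) fun r hr => hcon r hr
      have h1 : (1 : ENNReal) ≤ ENNReal.ofReal a :=
        (hden u hu).trans (Filter.limsup_le_of_le (by isBoundedDefault) hev)
      exact (ENNReal.ofReal_lt_one.mpr ha1).not_ge h1
    obtain ⟨r, ⟨hr0', hrc⟩, hratio⟩ := hfreq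
    have hrε : r < ε := lt_of_lt_of_le hrc ((min_le_left _ _).trans (min_le_left _ _))
    have hrr0 : r < r0 := lt_of_lt_of_le hrc ((min_le_left _ _).trans (min_le_right _ _))
    have hrm : r < Real.exp (-(m : ℝ)) := lt_of_lt_of_le hrc (min_le_right _ _)
    have hgr : 0 < g r := hg_pos r ⟨hr0', hrr0⟩
    have hmul : ENNReal.ofReal a * ENNReal.ofReal (g r) < μ (dball u r) :=
      (ENNReal.lt_div_iff_mul_lt (Or.inl (ENNReal.ofReal_pos.mpr hgr).ne')
        (Or.inl ENNReal.ofReal_ne_top)).mp hratio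
    have hexn : ∃ n : ℕ, Real.exp (-(n : ℝ)) < r := by
      obtain ⟨k, hk⟩ := exists_nat_gt (-Real.log r)
      refine ⟨k, ?_⟩
      have h2 : -(k : ℝ) < Real.log r := by linarith
      calc Real.exp (-(k : ℝ)) < Real.exp (Real.log r) := Real.exp_lt_exp.mpr h2
        _ = r := Real.exp_log hr0'
    have hnr : Real.exp (-(Nat.find hexn : ℝ)) < r := Nat.find_spec hexn
    refine ⟨Nat.find hexn, ?_, hnr.trans hrε, hnr.trans hrr0, ?_⟩
    · have hmn : m ≤ Nat.find hexn := by
        have h3 := Real.exp_lt_exp.mp (hnr.trans hrm)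
        have h4 : (m : ℝ) < (Nat.find hexn : ℝ) := by linarith
        exact_mod_cast h4.le
      exact (cyl_anti hmn).trans hm
    · have hmono : g (Real.exp (-(Nat.find hexn : ℝ))) ≤ g r :=
        hg_mono ⟨Real.exp_pos _, hnr.trans hrr0⟩ ⟨hr0', hrr0⟩ hnr.le
      calc ENNReal.ofReal a * ENNReal.ofReal (g (Real.exp (-(Nat.find hexn : ℝ))))
          ≤ ENNReal.ofReal a * ENNReal.ofReal (g r) :=
            mul_le_mul_right (ENNReal.ofReal_le_ofReal hmono) _
        _ ≤ μ (dball u r) := hmul.le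
        _ ≤ μ (cyl u (Nat.find hexn)) := measure_mono (dball_subset_cyl_find hexn)
  -- the disjoint family
  set Lm : pU → ℕ := Lmin μ U g a ε r0 with hLm
  set D : Set (Set pU) := (fun u => cyl u (Lm u)) '' A with hD
  have hDcount : D.Countable := by
    refine Set.Countable.mono ?_ cyl_countable_range
    rintro S ⟨u, hu, rfl⟩
    exact cyl_mem_range u _
  haveI := hDcount.to_subtype
  haveI : Encodable ↥D := Encodable.ofCountable _
  set Cc : ℕ → Set pU := fun k => ((Encodable.decode₂ ↥D k).map Subtype.val).getD ∅ with hCc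
  have hCcase : ∀ k, Cc k = ∅ ∨ Cc k ∈ D := by
    intro k
    rcases hdk : Encodable.decode₂ (↥D) k with _ | d
    · left; simp [hCc, hdk]
    · right; simp only [hCc, hdk, Option.map_some, Option.getD_some]; exact d.2
  have hDprop : ∀ S ∈ D, ∃ u n, S = cyl u n ∧ cyl u n ⊆ U ∧ Real.exp (-(n : ℝ)) < ε ∧
      ENNReal.ofReal a * ENNReal.ofReal (g (Real.exp (-(n : ℝ)))) ≤ μ (cyl u n) := by
    rintro S ⟨u, hu, rfl⟩
    have good := Lmin_spec (hexall u hu)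
    exact ⟨u, Lm u, rfl, good.1, good.2.1, good.2.2.2⟩
  have hcov : A ⊆ ⋃ k, Cc k := by
    intro u hu
    have hmem : cyl u (Lm u) ∈ D := ⟨u, hu, rfl⟩
    refine Set.mem_iUnion.mpr ⟨Encodable.encode (⟨_, hmem⟩ : ↥D), ?_⟩
    simp only [hCc, Encodable.decode₂_encode, Option.map_some, Option.getD_some]
    exact self_mem_cyl u _
  have hdiam : ∀ k, ediam (Cc k) ≤ ENNReal.ofReal ε := by
    intro k
    rcases hCcase k with h | h
    · rw [h, ediam_empty]; exact zero_le
    · obtain ⟨u, n, heq, _, hlt, _⟩ := hDprop _ h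
      rw [heq, ediam_cyl]
      exact ENNReal.ofReal_le_ofReal hlt.le
  have hmeas : ∀ k, MeasurableSet (Cc k) := by
    intro k
    rcases hCcase k with h | h
    · rw [h]; exact MeasurableSet.empty
    · obtain ⟨u, n, heq, _, _, _⟩ := hDprop _ h
      rw [heq]; exact measurableSet_cyl u n
  have hsubU : ∀ k, Cc k ⊆ U := by
    intro k
    rcases hCcase k with h | h
    · rw [h]; exact Set.empty_subset _
    · obtain ⟨u, n, heq, hsub, _, _⟩ := hDprop _ h
      rw [heq]; exact hsub
  have hDpair : ∀ S ∈ D, ∀ T ∈ D, S ≠ T → Disjoint S T := by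
    rintro S ⟨u, hu, rfl⟩ T ⟨v, hv, rfl⟩ hST
    by_contra hnd
    apply hST
    rcases le_total (Lm u) (Lm v) with hle | hle
    · exact cyl_Lmin_eq_of_le (hexall u hu) (hexall v hv) hle hnd
    · exact (cyl_Lmin_eq_of_le (hexall v hv) (hexall u hu) hle fun hd => hnd hd.symm).symm
  have hdisj : Pairwise (Function.onFun Disjoint Cc) := by
    intro k l hkl
    rcases hdk : Encodable.decode₂ (↥D) k with _ | d1
    · have : Cc k = ∅ := by simp [hCc, hdk]
      simp only [Function.onFun, this]
      exact disjoint_bot_left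
    · rcases hdl : Encodable.decode₂ (↥D) l with _ | d2
      · have : Cc l = ∅ := by simp [hCc, hdl]
        simp only [Function.onFun, this]
        exact disjoint_bot_right
      · have hk' : Encodable.encode d1 = k := Encodable.mem_decode₂.mp (by rw [hdk]; rfl)
        have hl' : Encodable.encode d2 = l := Encodable.mem_decode₂.mp (by rw [hdl]; rfl)
        have hne : (d1 : Set pU) ≠ (d2 : Set pU) := by
          intro hh
          exact hkl (by rw [← hk', ← hl', Subtype.ext hh])
        have : Cc k = (d1 : Set pU) := by simp [hCc, hdk]
        have h2 : Cc l = (d2 : Set pU) := by simp [hCc, hdl]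
        simp only [Function.onFun, this, h2]
        exact hDpair _ d1.2 _ d2.2 hne
  -- put everything together
  have ha0' : ENNReal.ofReal a ≠ 0 := (ENNReal.ofReal_pos.mpr ha0).ne'
  have hptwise : ∀ k, gaugeOf g (Cc k) ≤ (ENNReal.ofReal a)⁻¹ * μ (Cc k) := by
    intro k
    rcases hCcase k with h | h
    · rw [h, gaugeOf_empty]; exact zero_le
    · obtain ⟨u, n, heq, _, _, hle⟩ := hDprop _ h
      rw [heq, gaugeOf_cyl]
      rw [← ENNReal.div_eq_inv_mul]
      rw [ENNReal.le_div_iff_mul_le (Or.inl ha0') (Or.inl ENNReal.ofReal_ne_top)]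
      rw [mul_comm]
      exact hle
  calc Hpre g ε A ≤ ∑' k, gaugeOf g (Cc k) :=
        iInf_le_of_le Cc (iInf_le_of_le hcov (iInf_le _ hdiam))
    _ ≤ ∑' k, (ENNReal.ofReal a)⁻¹ * μ (Cc k) := ENNReal.tsum_le_tsum hptwise
    _ = (ENNReal.ofReal a)⁻¹ * ∑' k, μ (Cc k) := ENNReal.tsum_mul_left
    _ = (ENNReal.ofReal a)⁻¹ * μ (⋃ k, Cc k) := by rw [measure_iUnion hdisj hmeas]
    _ ≤ (ENNReal.ofReal a)⁻¹ * μ U :=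
        mul_le_mul_right (measure_mono (Set.iUnion_subset hsubU)) _
    _ ≤ (ENNReal.ofReal a)⁻¹ * (μ A + ENNReal.ofReal η) := mul_le_mul_right hUlt.le _


open MeasureTheory in
/-- Rogers–Taylor: if limsup μ(B(u,r))/g(r) ≥ 1 on A, then H_g(A) ≤ C μ(A). -/
theorem Hmeas_le_of_upper_density_ge
    (r0 C : ℝ) (hr0 : 0 < r0) (hC : 1 < C) (g : ℝ → ℝ)
    (hg_pos : ∀ r ∈ Set.Ioo 0 r0, 0 < g r)
    (hg_mono : MonotoneOn g (Set.Ioo 0 r0))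
    (hg_rc : ∀ r ∈ Set.Ioo 0 r0, ContinuousWithinAt g (Set.Ici r) r)
    (hg_lim : Filter.Tendsto g (nhdsWithin 0 (Set.Ioi 0)) (nhds 0))
    (hg_dbl : ∀ r : ℝ, 0 < r → r < r0 / 2 → g (2 * r) ≤ C * g r)
    (μ : Measure pU) [IsFiniteMeasure μ]
    (A : Set pU) (hA : MeasurableSet A)
    (hden : ∀ u ∈ A, 1 ≤ Filter.limsup (fun r : ℝ => μ (dball u r) / ENNReal.ofReal (g r))
        (nhdsWithin 0 (Set.Ioi 0))) :
    Hmeas g A ≤ ENNReal.ofReal C * μ A := by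
  have hfin : μ A ≠ ⊤ := measure_ne_top μ A
  have main : Hmeas g A ≤ μ A := by
    rw [Hmeas]
    refine iSup_le fun ε => iSup_le fun hε => ?_
    refine ENNReal.le_of_forall_pos_le_add fun δ' hδ' _ => ?_
    set M := (μ A).toReal with hM
    have hM0 : 0 ≤ M := ENNReal.toReal_nonneg
    have hδ'' : (0:ℝ) < (δ' : ℝ) := hδ'
    set a : ℝ := (M + (δ' : ℝ)/2) / (M + (δ' : ℝ)) with ha_def
    have hden1 : (0:ℝ) < M + (δ' : ℝ) := by positivity
    have hnum : (0:ℝ) < M + (δ' : ℝ)/2 := by positivity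
    have ha0 : 0 < a := div_pos hnum hden1
    have ha1 : a < 1 := (div_lt_one hden1).mpr (by linarith)
    have hk := key_lemma r0 hr0 g hg_pos hg_mono μ A hden a ((δ' : ℝ)/2) ε ha0 ha1
      (by positivity) hε
    refine hk.trans ?_
    have heq : (ENNReal.ofReal a)⁻¹ * (μ A + ENNReal.ofReal ((δ' : ℝ)/2)) = μ A + (δ' : ENNReal) := by
      rw [← ENNReal.ofReal_inv_of_pos ha0]
      rw [show μ A = ENNReal.ofReal M from (ENNReal.ofReal_toReal hfin).symm]
      rw [← ENNReal.ofReal_add hM0 (by positivity)]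
      rw [← ENNReal.ofReal_mul (by positivity)]
      have hmul : a⁻¹ * (M + (δ' : ℝ)/2) = M + (δ' : ℝ) := by
        rw [ha_def, inv_div, div_mul_cancel₀ _ hnum.ne']
      rw [hmul, ENNReal.ofReal_add hM0 hδ''.le, ENNReal.ofReal_coe_nnreal]
    rw [heq]
  calc Hmeas g A ≤ μ A := main
    _ = 1 * μ A := (one_mul _).symm
    _ ≤ ENNReal.ofReal C * μ A :=
        mul_le_mul_left (ENNReal.one_le_ofReal.mpr hC.le) _
end
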